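/- Let (H,{F_A},{F_G}) be a GR(1) game with singleton winning conditions, Z^∞ = ⟦φ₄⟧, and f¹ the memoryless strategy extracted from the rank. If q ∈ Z^∞ and L_q(H,F_G) ⊆ L_q(H,F_A), then Pre(L_q(H,f¹)) = Pre(L_q(H,f¹) ∩ L_q(H,F_A)); that is, f¹ is non-conflicting from q. -/

import Mathlib

namespace GR1

/-- A two-player game graph `H = ⟨Q⁰, Q¹, δ⁰, δ¹, q₀⟩`.  `env` is the set `Q⁰` of
environment states, `sys` the set `Q¹` of system states, and `delta` combines the
transition functions `δ⁰` and `δ¹`. -/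
structure GameGraph (Q : Type*) where
  env : Set Q
  sys : Set Q
  delta : Q → Set Q
  disjoint_env_sys : Disjoint env sys
  union_env_sys : env ∪ sys = Set.univ
  delta_env : ∀ q ∈ env, delta q ⊆ sys
  delta_sys : ∀ q ∈ sys, delta q ⊆ env
  delta_nonempty : ∀ q, (delta q).Nonempty
  init : Q
  init_env : init ∈ env

namespace GameGraph

/-- The existential predecessor operator `Pre∃`. -/
def PreE {Q : Type*} (G : GameGraph Q) (P : Set Q) : Set Q :=
  {q | (G.delta q ∩ P).Nonempty}

/-- The universal predecessor operator `Pre∀`. -/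
def PreA {Q : Type*} (G : GameGraph Q) (P : Set Q) : Set Q :=
  {q | G.delta q ⊆ P}

/-- The player-0 (environment) controllable predecessor operator `Pre⁰`. -/
def Pre0 {Q : Type*} (G : GameGraph Q) (P : Set Q) : Set Q :=
  {q | q ∈ G.env ∧ (G.delta q ∩ P).Nonempty} ∪ {q | q ∈ G.sys ∧ G.delta q ⊆ P}

/-- The player-1 (system) controllable predecessor operator `Pre¹`. -/
def Pre1 {Q : Type*} (G : GameGraph Q) (P : Set Q) : Set Q :=
  {q | q ∈ G.env ∧ G.delta q ⊆ P} ∪ {q | q ∈ G.sys ∧ (G.delta q ∩ P).Nonempty}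

/-- The conditional predecessor `Precond(P,P') = Pre∃(P) ∩ Pre¹(P ∪ P')`. -/
def Precond {Q : Type*} (G : GameGraph Q) (P P' : Set Q) : Set Q :=
  G.PreE P ∩ G.Pre1 (P ∪ P')

/-- The dual conditional predecessor `Precondᶜ(P,P') = Pre∀(P) ∪ Pre⁰(P ∩ P')`. -/
def PrecondC {Q : Type*} (G : GameGraph Q) (P P' : Set Q) : Set Q :=
  G.PreA P ∪ G.Pre0 (P ∩ P')

end GameGraph

/-- Knaster–Tarski least fixed point over the powerset lattice. -/
def lfpSet {Q : Type*} (F : Set Q → Set Q) : Set Q := ⋂₀ {S | F S ⊆ S}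

/-- Knaster–Tarski greatest fixed point over the powerset lattice. -/
def gfpSet {Q : Type*} (F : Set Q → Set Q) : Set Q := ⋃₀ {S | S ⊆ F S}

/-- Knaster–Tarski least fixed point over the lattice of vectors of sets. -/
def lfpVec {Q : Type*} {n : ℕ} (F : (Fin n → Set Q) → (Fin n → Set Q)) : Fin n → Set Q :=
  fun a => ⋂ V ∈ {V : Fin n → Set Q | ∀ a', F V a' ⊆ V a'}, V a

/-- Knaster–Tarski greatest fixed point over the lattice of vectors of sets. -/
def gfpVec {Q : Type*} {n : ℕ} (F : (Fin n → Set Q) → (Fin n → Set Q)) : Fin n → Set Q :=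
  fun a => ⋃ V ∈ {V : Fin n → Set Q | ∀ a', V a' ⊆ F V a'}, V a

/-- Cyclic successor of a mode: `a⁺ = (a mod n) + 1` in 1-based counting. -/
def modeSucc {n : ℕ} (a : Fin n) : Fin n :=
  ⟨(a.val + 1) % n, Nat.mod_lt _ a.pos⟩

/-- `π` is an (infinite) play over `G` starting in the state `q`. -/
def IsPlayFrom {Q : Type*} (G : GameGraph Q) (q : Q) (π : ℕ → Q) : Prop :=
  π 0 = q ∧ ∀ k, π (k + 1) ∈ G.delta (π k)

/-- `Inf(π) ∩ F ≠ ∅` : the play `π` visits the set `F` infinitely often. -/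
def InfOft {Q : Type*} (π : ℕ → Q) (F : Set Q) : Prop := ∀ n, ∃ k, n ≤ k ∧ π k ∈ F

/-- `L_q(H,F)` : plays from `q` satisfying the Büchi condition `F`. -/
def LBuchi {Q : Type*} (G : GameGraph Q) (q : Q) (F : Set Q) : Set (ℕ → Q) :=
  {π | IsPlayFrom G q π ∧ InfOft π F}

/-- `L_q(H,𝓕)` : plays from `q` satisfying the generalized Büchi condition `𝓕`. -/
def LGenBuchi {Q ι : Type*} (G : GameGraph Q) (q : Q) (F : ι → Set Q) : Set (ℕ → Q) :=
  {π | IsPlayFrom G q π ∧ ∀ i, InfOft π (F i)}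

/-- `Pre(L)` : the set of all finite prefixes of the (infinite) words in `L`. -/
def prefixes {Q : Type*} (L : Set (ℕ → Q)) : Set (List Q) :=
  {w | ∃ π ∈ L, ∃ k, w = (List.range k).map π}

/-- A (history dependent) system strategy: on a history ending in a system state it
produces a `δ¹`-successor of that state. -/
def IsSysStrategy {Q : Type*} (G : GameGraph Q) (f : List Q → Q) : Prop :=
  ∀ (w : List Q) (q : Q), q ∈ G.sys → f (w ++ [q]) ∈ G.delta q

/-- The finite history `π|_{[0,k]}` of a play. -/
def histUpTo {Q : Type*} (π : ℕ → Q) (k : ℕ) : List Q := (List.range (k + 1)).map π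

/-- `L_q(H,f¹)` : plays from `q` compliant with the system strategy `f¹`. -/
def Lstrat {Q : Type*} (G : GameGraph Q) (q : Q) (f : List Q → Q) : Set (ℕ → Q) :=
  {π | IsPlayFrom G q π ∧ ∀ k, π k ∈ G.sys → π (k + 1) = f (histUpTo π k)}

/-- `L_q(H,f¹)` for a memoryless system strategy `f¹ : Q → Q`. -/
def Lmem {Q : Type*} (G : GameGraph Q) (q : Q) (f : Q → Q) : Set (ℕ → Q) :=
  {π | IsPlayFrom G q π ∧ ∀ k, π k ∈ G.sys → π (k + 1) = f (π k)}

/-- Strict lexicographic order on ranks. -/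
def rankLt (p r : ℕ × ℕ) : Prop := p.1 < r.1 ∨ (p.1 = r.1 ∧ p.2 < r.2)

/-- Lexicographic order on ranks. -/
def rankLe (p r : ℕ × ℕ) : Prop := p.1 < r.1 ∨ (p.1 = r.1 ∧ p.2 ≤ r.2)

/-! ### The 4-nested fixed point `φ₄` for singleton winning conditions -/

/-- The body `(F_G ∩ Pre¹(Z)) ∪ Pre¹(Y) ∪ ((Q∖F_A) ∩ Precond(W, X∖F_A))`. -/
def body {Q : Type*} (G : GameGraph Q) (FA FG Z Y X W : Set Q) : Set Q :=
  (FG ∩ G.Pre1 Z) ∪ G.Pre1 Y ∪ (FAᶜ ∩ G.Precond W (X \ FA))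

def innerW {Q : Type*} (G : GameGraph Q) (FA FG Z Y X : Set Q) : Set Q :=
  lfpSet (fun W => body G FA FG Z Y X W)

def innerX {Q : Type*} (G : GameGraph Q) (FA FG Z Y : Set Q) : Set Q :=
  gfpSet (fun X => innerW G FA FG Z Y X)

def innerY {Q : Type*} (G : GameGraph Q) (FA FG Z : Set Q) : Set Q :=
  lfpSet (fun Y => innerX G FA FG Z Y)

/-- `⟦φ₄⟧ = Z^∞` : the value of `νZ.μY.νX.μW. (F_G ∩ Pre¹(Z)) ∪ Pre¹(Y) ∪
((Q∖F_A) ∩ Precond(W, X∖F_A))`. -/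
def phi4 {Q : Type*} (G : GameGraph Q) (FA FG : Set Q) : Set Q :=
  gfpSet (fun Z => innerY G FA FG Z)

/-- The approximants `Yⁱ` of `Y` in the terminal iteration over `Z` (`Y⁰ = ∅`). -/
def Yapprox {Q : Type*} (G : GameGraph Q) (FA FG : Set Q) : ℕ → Set Q
  | 0 => ∅
  | i + 1 => innerX G FA FG (phi4 G FA FG) (Yapprox G FA FG i)

/-- The approximants `Wⁱ_j` of `W` computed with `X = Xⁱ = Yⁱ` and `Y = Yⁱ⁻¹`. -/
def Wapprox {Q : Type*} (G : GameGraph Q) (FA FG : Set Q) (i : ℕ) : ℕ → Set Q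
  | 0 => ∅
  | j + 1 =>
      body G FA FG (phi4 G FA FG) (Yapprox G FA FG (i - 1)) (Yapprox G FA FG i)
        (Wapprox G FA FG i j)

/-- `rank(q) = (i,j)` iff `q ∈ (Yⁱ∖Yⁱ⁻¹) ∩ (Wⁱ_j∖Wⁱ_{j−1})` with `i,j > 0`. -/
def hasRank {Q : Type*} (G : GameGraph Q) (FA FG : Set Q) (q : Q) (i j : ℕ) : Prop :=
  0 < i ∧ 0 < j ∧
    q ∈ (Yapprox G FA FG i \ Yapprox G FA FG (i - 1)) ∩
        (Wapprox G FA FG i j \ Wapprox G FA FG i (j - 1))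

/-- The memoryless system strategy extracted from the ranking: `f¹(q) ∈ δ¹(q)`,
`rank(f¹(q)) < rank(q)` whenever `rank(q) > (1,1)`, and `f¹(q) ∈ Z^∞` otherwise. -/
def GoodStrategy {Q : Type*} (G : GameGraph Q) (FA FG : Set Q) (f : Q → Q) : Prop :=
  ∀ q, q ∈ G.sys → q ∈ phi4 G FA FG →
    f q ∈ G.delta q ∧
      ∀ i j, hasRank G FA FG q i j →
        (((i, j) = ((1 : ℕ), (1 : ℕ)) → f q ∈ phi4 G FA FG) ∧
          ((i, j) ≠ ((1 : ℕ), (1 : ℕ)) →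
            ∃ i' j', hasRank G FA FG (f q) i' j' ∧ rankLt (i', j') (i, j)))

/-! ### The negated fixed point `φ̄₄` (singleton conditions) -/

/-- The simplified negated body
`Pre⁰(Z̄) ∪ ((Q∖F_G) ∩ F_A ∩ Pre⁰(Ȳ)) ∪ ((Q∖F_G) ∩ Precondᶜ(W̄, X̄ ∪ F_A))`. -/
def nbody {Q : Type*} (G : GameGraph Q) (FA FG Z Y X W : Set Q) : Set Q :=
  G.Pre0 Z ∪ (FGᶜ ∩ FA ∩ G.Pre0 Y) ∪ (FGᶜ ∩ G.PrecondC W (X ∪ FA))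

/-- The simplified negated fixed point `φ̄₄ = μZ̄.νȲ.μX̄.νW̄. nbody`. -/
def phi4neg {Q : Type*} (G : GameGraph Q) (FA FG : Set Q) : Set Q :=
  lfpSet (fun Z => gfpSet (fun Y => lfpSet (fun X => gfpSet (fun W =>
    nbody G FA FG Z Y X W))))

/-- The unsimplified negation body
`((Q∖F_G) ∪ Pre⁰(Z̄)) ∩ Pre⁰(Ȳ) ∩ (F_A ∪ Precondᶜ(W̄, X̄ ∪ F_A))`. -/
def nbodyRaw {Q : Type*} (G : GameGraph Q) (FA FG Z Y X W : Set Q) : Set Q :=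
  (FGᶜ ∪ G.Pre0 Z) ∩ G.Pre0 Y ∩ (FA ∪ G.PrecondC W (X ∪ FA))

/-- The unsimplified negated fixed point. -/
def phi4negRaw {Q : Type*} (G : GameGraph Q) (FA FG : Set Q) : Set Q :=
  lfpSet (fun Z => gfpSet (fun Y => lfpSet (fun X => gfpSet (fun W =>
    nbodyRaw G FA FG Z Y X W))))

/-- The approximants `Z̄ⁱ` of the negated fixed point (`Z̄⁰ = ∅`). -/
def Zbar {Q : Type*} (G : GameGraph Q) (FA FG : Set Q) : ℕ → Set Q
  | 0 => ∅
  | i + 1 =>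
      gfpSet (fun Y => lfpSet (fun X => gfpSet (fun W =>
        nbody G FA FG (Zbar G FA FG i) Y X W)))

/-- The approximants `X̄ⁱ_j` of `X̄` computed while computing `Z̄ⁱ` (using `Ȳ = Z̄ⁱ` and
`Z̄ = Z̄ⁱ⁻¹`), with `X̄ⁱ₀ = ∅`. -/
def Xbar {Q : Type*} (G : GameGraph Q) (FA FG : Set Q) (i : ℕ) : ℕ → Set Q
  | 0 => ∅
  | j + 1 =>
      gfpSet (fun W =>
        nbody G FA FG (Zbar G FA FG (i - 1)) (Zbar G FA FG i) (Xbar G FA FG i j) W)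

/-- The negated rank: `rank(q) = (i,j)` iff `q ∈ X̄ⁱ_j ∖ X̄ⁱ_{j−1}` with `i,j > 0`. -/
def nrank {Q : Type*} (G : GameGraph Q) (FA FG : Set Q) (q : Q) (i j : ℕ) : Prop :=
  0 < i ∧ 0 < j ∧ q ∈ Xbar G FA FG i j \ Xbar G FA FG i (j - 1)

/-- Environment moves permitted during the inductive construction of the reachable
region `R_{f¹}` (cases (a'), (b'), (c'2), (c'3) and the remaining case (c'1)). -/
def envStep {Q : Type*} (G : GameGraph Q) (FA FG : Set Q) (q' q'' : Q) : Prop :=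
  q'' ∈ G.delta q' ∧
    ∃ i j, nrank G FA FG q' i j ∧
      ((q'' ∈ (phi4 G FA FG)ᶜ ∧ ∃ i' j', nrank G FA FG q'' i' j' ∧ i' ≤ i - 1) ∨
       (q' ∈ FA \ FG ∧ q'' ∈ (phi4 G FA FG)ᶜ ∧
          ∃ i' j', nrank G FA FG q'' i' j' ∧ i' ≤ i) ∨
       (q'' ∈ (phi4 G FA FG)ᶜ ∧
          ∃ i' j', nrank G FA FG q'' i' j' ∧ rankLe (i', j') (i, j - 1)) ∨
       (q'' ∈ (phi4 G FA FG)ᶜ ∧ q'' ∈ FA ∧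
          ∃ i' j', nrank G FA FG q'' i' j' ∧ rankLe (i', j') (i, j)) ∨
       (∀ p ∈ G.delta q', p ∈ (phi4 G FA FG)ᶜ ∧
          ∃ i' j', nrank G FA FG p i' j' ∧ rankLe (i', j') (i, j)))

/-- `L_q(H,f¹,R_{f¹})` : plays from `q` compliant with `f¹` that remain within the
reachable region `R_{f¹}`, i.e. in which every environment move follows the rules of
the inductive construction of `R_{f¹}`. -/
def Lrestr {Q : Type*} (G : GameGraph Q) (FA FG : Set Q) (q : Q) (f : List Q → Q) :
    Set (ℕ → Q) :=
  {π | π ∈ Lstrat G q f ∧ ∀ k, π k ∈ G.env → envStep G FA FG (π k) (π (k + 1))}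

/-! ### The vectorized fixed point `φ₄ᵛ` for general GR(1) conditions -/

/-- The body `Ω^{ab}` of the vectorized fixed point. -/
def bodyV {Q : Type*} {n m : ℕ} (G : GameGraph Q) (FAv : Fin m → Set Q)
    (FGv : Fin n → Set Q) (Zv : Fin n → Set Q) (a : Fin n) (b : Fin m)
    (Y X W : Set Q) : Set Q :=
  (FGv a ∩ G.Pre1 (Zv (modeSucc a))) ∪ G.Pre1 Y ∪ ((FAv b)ᶜ ∩ G.Precond W (X \ FAv b))

def innerWV {Q : Type*} {n m : ℕ} (G : GameGraph Q) (FAv : Fin m → Set Q)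
    (FGv : Fin n → Set Q) (Zv : Fin n → Set Q) (a : Fin n) (b : Fin m)
    (Y X : Set Q) : Set Q :=
  lfpSet (fun W => bodyV G FAv FGv Zv a b Y X W)

def innerXV {Q : Type*} {n m : ℕ} (G : GameGraph Q) (FAv : Fin m → Set Q)
    (FGv : Fin n → Set Q) (Zv : Fin n → Set Q) (a : Fin n) (b : Fin m)
    (Y : Set Q) : Set Q :=
  gfpSet (fun X => innerWV G FAv FGv Zv a b Y X)

/-- The vector `[Z¹,…,Zⁿ]` of the vectorized fixed point `φ₄ᵛ`. -/
def phi4v {Q : Type*} {n m : ℕ} (G : GameGraph Q) (FAv : Fin m → Set Q)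
    (FGv : Fin n → Set Q) : Fin n → Set Q :=
  gfpVec (fun Zv a => lfpSet (fun Y => ⋃ b, innerXV G FAv FGv Zv a b Y))

/-- `⟦φ₄ᵛ⟧ = Z^∞ = ⋃_a Zᵃ^∞`. -/
def phi4vSem {Q : Type*} {n m : ℕ} (G : GameGraph Q) (FAv : Fin m → Set Q)
    (FGv : Fin n → Set Q) : Set Q :=
  ⋃ a, phi4v G FAv FGv a

/-- The approximants `ᵃYⁱ` (with `ᵃY⁰ = ∅`) of `Yᵃ` in the terminal iteration. -/
def YapproxV {Q : Type*} {n m : ℕ} (G : GameGraph Q) (FAv : Fin m → Set Q)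
    (FGv : Fin n → Set Q) (a : Fin n) : ℕ → Set Q
  | 0 => ∅
  | i + 1 => ⋃ b, innerXV G FAv FGv (phi4v G FAv FGv) a b (YapproxV G FAv FGv a i)

/-- The fixed point `ᵃᵇXⁱ` of `X^{ab}` computed during the `i`-th iteration. -/
def XfixV {Q : Type*} {n m : ℕ} (G : GameGraph Q) (FAv : Fin m → Set Q)
    (FGv : Fin n → Set Q) (a : Fin n) (b : Fin m) (i : ℕ) : Set Q :=
  innerXV G FAv FGv (phi4v G FAv FGv) a b (YapproxV G FAv FGv a (i - 1))

/-- The approximants `ᵃᵇWⁱ_j` of `W^{ab}` computed while computing `ᵃYⁱ`. -/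
def WapproxV {Q : Type*} {n m : ℕ} (G : GameGraph Q) (FAv : Fin m → Set Q)
    (FGv : Fin n → Set Q) (a : Fin n) (b : Fin m) (i : ℕ) : ℕ → Set Q
  | 0 => ∅
  | j + 1 =>
      bodyV G FAv FGv (phi4v G FAv FGv) a b (YapproxV G FAv FGv a (i - 1))
        (XfixV G FAv FGv a b i) (WapproxV G FAv FGv a b i j)

/-- The mode-based rank: `ᵃᵇrank(q) = (i,j)` iff
`q ∈ (ᵃYⁱ∖ᵃYⁱ⁻¹) ∩ (ᵃᵇWⁱ_j∖ᵃᵇWⁱ_{j−1})` with `i,j > 0`. -/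
def hasRankV {Q : Type*} {n m : ℕ} (G : GameGraph Q) (FAv : Fin m → Set Q)
    (FGv : Fin n → Set Q) (a : Fin n) (b : Fin m) (q : Q) (i j : ℕ) : Prop :=
  0 < i ∧ 0 < j ∧
    q ∈ (YapproxV G FAv FGv a i \ YapproxV G FAv FGv a (i - 1)) ∩
        (WapproxV G FAv FGv a b i j \ WapproxV G FAv FGv a b i (j - 1))

/-- The finite-memory system strategy extracted from the mode-based ranking. -/
def GoodStrategyV {Q : Type*} {n m : ℕ} (G : GameGraph Q) (FAv : Fin m → Set Q)
    (FGv : Fin n → Set Q) (f : Q × Fin n × Fin m → Q × Fin n × Fin m) : Prop :=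
  ∀ (q : Q) (a : Fin n) (b : Fin m), q ∈ G.sys → q ∈ phi4v G FAv FGv a →
    (f (q, a, b)).1 ∈ G.delta q ∧
      ∀ i j, hasRankV G FAv FGv a b q i j →
        (((i, j) = ((1 : ℕ), (1 : ℕ)) →
            (f (q, a, b)).1 ∈ phi4v G FAv FGv (modeSucc a) ∧
              (f (q, a, b)).2.1 = modeSucc a) ∧
          (1 < i ∧ j = 1 →
            (f (q, a, b)).2.1 = a ∧
              ∃ i' j',
                hasRankV G FAv FGv a ((f (q, a, b)).2.2) ((f (q, a, b)).1) i' j' ∧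
                  i' ≤ i - 1) ∧
          (1 < j →
            (f (q, a, b)).2.1 = a ∧ (f (q, a, b)).2.2 = b ∧
              ∃ i' j',
                hasRankV G FAv FGv a b ((f (q, a, b)).1) i' j' ∧
                  rankLe (i', j') (i, j - 1)))

/-- Compliance of a play with a finite-memory strategy via mode traces `α`, `β`. -/
def CompliantModeV {Q : Type*} {n m : ℕ} (G : GameGraph Q) (FAv : Fin m → Set Q)
    (FGv : Fin n → Set Q) (f : Q × Fin n × Fin m → Q × Fin n × Fin m)
    (π : ℕ → Q) (α : ℕ → Fin n) (β : ℕ → Fin m) : Prop :=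
  ∀ k,
    (π k ∈ G.sys → (π (k + 1), α (k + 1), β (k + 1)) = f (π k, α k, β k)) ∧
      (π k ∈ G.env →
        (hasRankV G FAv FGv (α k) (β k) (π (k + 1)) 1 1 →
            α (k + 1) = modeSucc (α k)) ∧
          ((∃ i, 1 < i ∧ hasRankV G FAv FGv (α k) (β k) (π (k + 1)) i 1) →
            α (k + 1) = α k) ∧
          ((∃ i j, 1 < j ∧ hasRankV G FAv FGv (α k) (β k) (π (k + 1)) i j) →
            α (k + 1) = α k ∧ β (k + 1) = β k))

/-- `L_q(H,f¹)` for a finite-memory strategy: plays from `q` compliant with `f¹`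
for some mode traces. -/
def LmodeV {Q : Type*} {n m : ℕ} (G : GameGraph Q) (FAv : Fin m → Set Q)
    (FGv : Fin n → Set Q) (q : Q) (f : Q × Fin n × Fin m → Q × Fin n × Fin m) :
    Set (ℕ → Q) :=
  {π | IsPlayFrom G q π ∧ ∃ α β, CompliantModeV G FAv FGv f π α β}

/-- `ᵃD = F_Gᵃ ∩ Pre¹(Z^{a⁺,∞})`. -/
def DsetV {Q : Type*} {n m : ℕ} (G : GameGraph Q) (FAv : Fin m → Set Q)
    (FGv : Fin n → Set Q) (a : Fin n) : Set Q :=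
  FGv a ∩ G.Pre1 (phi4v G FAv FGv (modeSucc a))

/-- `ᵃEⁱ = Pre¹(ᵃYⁱ⁻¹) ∖ ᵃYⁱ⁻¹`. -/
def EsetV {Q : Type*} {n m : ℕ} (G : GameGraph Q) (FAv : Fin m → Set Q)
    (FGv : Fin n → Set Q) (a : Fin n) (i : ℕ) : Set Q :=
  G.Pre1 (YapproxV G FAv FGv a (i - 1)) \ YapproxV G FAv FGv a (i - 1)

/-- `ᵃᵇΘⁱ_j = (Q∖F_Aᵇ) ∩ Precond(ᵃᵇWⁱ_{j−1}, ᵃᵇXⁱ∖F_Aᵇ)`. -/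
def ThetaV {Q : Type*} {n m : ℕ} (G : GameGraph Q) (FAv : Fin m → Set Q)
    (FGv : Fin n → Set Q) (a : Fin n) (b : Fin m) (i j : ℕ) : Set Q :=
  (FAv b)ᶜ ∩ G.Precond (WapproxV G FAv FGv a b i (j - 1)) (XfixV G FAv FGv a b i \ FAv b)

/-- `ᵃᵇRⁱ_j = ᵃᵇΘⁱ_j ∖ (ᵃᵇWⁱ_{j−1} ∪ ᵃYⁱ⁻¹ ∪ ᵃEⁱ ∪ ᵃD)`. -/
def RsetV {Q : Type*} {n m : ℕ} (G : GameGraph Q) (FAv : Fin m → Set Q)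
    (FGv : Fin n → Set Q) (a : Fin n) (b : Fin m) (i j : ℕ) : Set Q :=
  ThetaV G FAv FGv a b i j \
    (WapproxV G FAv FGv a b i (j - 1) ∪ YapproxV G FAv FGv a (i - 1) ∪
      EsetV G FAv FGv a i ∪ DsetV G FAv FGv a)

/-! ### The negated vectorized fixed point -/

/-- The body of the negated vectorized fixed point. -/
def nbodyV {Q : Type*} {n m : ℕ} (G : GameGraph Q) (FAv : Fin m → Set Q)
    (FGv : Fin n → Set Q) (Zv : Fin n → Set Q) (a : Fin n) (b : Fin m)
    (Y X W : Set Q) : Set Q :=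
  G.Pre0 (Zv (modeSucc a)) ∪ ((FGv a)ᶜ ∩ FAv b ∩ G.Pre0 Y) ∪
    ((FGv a)ᶜ ∩ G.PrecondC W (X ∪ FAv b))

/-- The coordinated approximants `Z̄ᵃⁱ` of the negated vectorized fixed point. -/
def ZbarV {Q : Type*} {n m : ℕ} (G : GameGraph Q) (FAv : Fin m → Set Q)
    (FGv : Fin n → Set Q) : ℕ → Fin n → Set Q
  | 0 => fun _ => ∅
  | i + 1 => fun a =>
      gfpSet (fun Y => ⋂ b, lfpSet (fun X => gfpSet (fun W =>
        nbodyV G FAv FGv (ZbarV G FAv FGv i) a b Y X W)))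

/-- The approximants `X̄^{ab,i}_j` of `X̄^{ab}` computed during the `i`-th iteration. -/
def XbarV {Q : Type*} {n m : ℕ} (G : GameGraph Q) (FAv : Fin m → Set Q)
    (FGv : Fin n → Set Q) (a : Fin n) (b : Fin m) (i : ℕ) : ℕ → Set Q
  | 0 => ∅
  | j + 1 =>
      gfpSet (fun W =>
        nbodyV G FAv FGv (ZbarV G FAv FGv (i - 1)) a b (ZbarV G FAv FGv i a)
          (XbarV G FAv FGv a b i j) W)

/-- The negated mode-based rank: `ᵃᵇrank(q) = (i,j)` iff `q ∈ X̄^{ab,i}_j∖X̄^{ab,i}_{j−1}`. -/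
def nrankV {Q : Type*} {n m : ℕ} (G : GameGraph Q) (FAv : Fin m → Set Q)
    (FGv : Fin n → Set Q) (a : Fin n) (b : Fin m) (q : Q) (i j : ℕ) : Prop :=
  0 < i ∧ 0 < j ∧ q ∈ XbarV G FAv FGv a b i j \ XbarV G FAv FGv a b i (j - 1)

/-- Environment moves permitted during the inductive construction of `R_{f¹}`
in the vectorized setting. -/
def envStepV {Q : Type*} {n m : ℕ} (G : GameGraph Q) (FAv : Fin m → Set Q)
    (FGv : Fin n → Set Q) (q' q'' : Q) : Prop :=
  q'' ∈ G.delta q' ∧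
    ∃ (a : Fin n) (b : Fin m) (i j : ℕ), nrankV G FAv FGv a b q' i j ∧
      ((q'' ∈ (phi4vSem G FAv FGv)ᶜ ∧
          ∃ b' i' j', nrankV G FAv FGv (modeSucc a) b' q'' i' j' ∧ i' ≤ i - 1) ∨
       (q' ∈ FAv b \ FGv a ∧ q'' ∈ (phi4vSem G FAv FGv)ᶜ ∧
          ∃ b' i' j', nrankV G FAv FGv a b' q'' i' j' ∧ i' ≤ i) ∨
       (q'' ∈ (phi4vSem G FAv FGv)ᶜ ∧
          ∃ i' j', nrankV G FAv FGv a b q'' i' j' ∧ rankLe (i', j') (i, j - 1)) ∨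
       (q'' ∈ (phi4vSem G FAv FGv)ᶜ ∧ q'' ∈ FAv b ∧
          ∃ i' j', nrankV G FAv FGv a b q'' i' j' ∧ rankLe (i', j') (i, j)) ∨
       (∀ p ∈ G.delta q', p ∈ (phi4vSem G FAv FGv)ᶜ ∧
          ∃ i' j', nrankV G FAv FGv a b p i' j' ∧ rankLe (i', j') (i, j)))

/-- `L_q(H,f¹,R_{f¹})` in the vectorized setting. -/
def LrestrV {Q : Type*} {n m : ℕ} (G : GameGraph Q) (FAv : Fin m → Set Q)
    (FGv : Fin n → Set Q) (q : Q) (f : List Q → Q) : Set (ℕ → Q) :=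
  {π | π ∈ Lstrat G q f ∧ ∀ k, π k ∈ G.env → envStepV G FAv FGv (π k) (π (k + 1))}

/-! ### Auxiliary fixed-point lemmas -/

section AuxFix
variable {Q : Type*}

theorem aux_lfp_le {F : Set Q → Set Q} {S : Set Q} (h : F S ⊆ S) : lfpSet F ⊆ S :=
  Set.sInter_subset_of_mem h

theorem aux_le_gfp {F : Set Q → Set Q} {S : Set Q} (h : S ⊆ F S) : S ⊆ gfpSet F :=
  Set.subset_sUnion_of_mem h

theorem aux_lfp_fixed {F : Set Q → Set Q} (hF : Monotone F) : F (lfpSet F) = lfpSet F := by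
  have h1 : F (lfpSet F) ⊆ lfpSet F := by
    intro x hx
    exact Set.mem_sInter.2 fun S hS => hS (hF (aux_lfp_le hS) hx)
  exact h1.antisymm (aux_lfp_le (hF h1))

theorem aux_gfp_fixed {F : Set Q → Set Q} (hF : Monotone F) : gfpSet F = F (gfpSet F) := by
  have h1 : gfpSet F ⊆ F (gfpSet F) := by
    intro x hx
    obtain ⟨S, hS, hxS⟩ := hx
    exact hF (Set.subset_sUnion_of_mem hS) (hS hxS)
  exact h1.antisymm (aux_le_gfp (hF h1))

theorem aux_lfp_mono {F F' : Set Q → Set Q} (hF' : Monotone F') (h : ∀ S, F S ⊆ F' S) :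
    lfpSet F ⊆ lfpSet F' :=
  aux_lfp_le ((h _).trans (aux_lfp_fixed hF').le)

theorem aux_gfp_mono {F F' : Set Q → Set Q} (hF : Monotone F) (h : ∀ S, F S ⊆ F' S) :
    gfpSet F ⊆ gfpSet F' :=
  aux_le_gfp ((aux_gfp_fixed hF).le.trans (h _))

theorem aux_exists_stab [Fintype Q] (C : ℕ → Set Q) (hm : ∀ k, C k ⊆ C (k + 1)) :
    ∃ N, C N = C (N + 1) := by
  by_contra h
  push_neg at h
  have hstrict : ∀ k, C k ⊂ C (k + 1) := fun k => (hm k).ssubset_of_ne (h k)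
  have hcard : ∀ k, k ≤ (C k).ncard := by
    intro k
    induction k with
    | zero => exact Nat.zero_le _
    | succ n ih =>
      exact Nat.succ_le_of_lt (lt_of_le_of_lt ih (Set.ncard_lt_ncard (hstrict n) (Set.toFinite _)))
  have h1 := hcard (Fintype.card Q + 1)
  have h2 : (C (Fintype.card Q + 1)).ncard ≤ Fintype.card Q := by
    have := Set.ncard_le_ncard (Set.subset_univ (C (Fintype.card Q + 1))) (Set.toFinite _)
    simpa [Set.ncard_univ] using this
  omega

end AuxFix

/-! ### Monotonicity of the fixed-point body -/

section AuxMono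
variable {Q : Type*}

theorem aux_PreE_mono (G : GameGraph Q) {P P' : Set Q} (h : P ⊆ P') : G.PreE P ⊆ G.PreE P' := by
  rintro x ⟨y, hy1, hy2⟩
  exact ⟨y, hy1, h hy2⟩

theorem aux_Pre1_mono (G : GameGraph Q) {P P' : Set Q} (h : P ⊆ P') : G.Pre1 P ⊆ G.Pre1 P' := by
  rintro x (⟨hx, hd⟩ | ⟨hx, y, hy1, hy2⟩)
  · exact Or.inl ⟨hx, hd.trans h⟩
  · exact Or.inr ⟨hx, y, hy1, h hy2⟩

theorem aux_body_mono (G : GameGraph Q) (FA FG : Set Q) {Z Z' Y Y' X X' W W' : Set Q}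
    (hZ : Z ⊆ Z') (hY : Y ⊆ Y') (hX : X ⊆ X') (hW : W ⊆ W') :
    body G FA FG Z Y X W ⊆ body G FA FG Z' Y' X' W' := by
  refine Set.union_subset_union (Set.union_subset_union ?_ ?_) ?_
  · exact Set.inter_subset_inter_right _ (aux_Pre1_mono G hZ)
  · exact aux_Pre1_mono G hY
  · refine Set.inter_subset_inter_right _ (Set.inter_subset_inter (aux_PreE_mono G hW)
      (aux_Pre1_mono G (Set.union_subset_union hW (Set.diff_subset_diff_left hX))))

theorem aux_body_monoW (G : GameGraph Q) (FA FG Z Y X : Set Q) :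
    Monotone (fun W => body G FA FG Z Y X W) :=
  fun _ _ h => aux_body_mono G FA FG subset_rfl subset_rfl subset_rfl h

theorem aux_innerW_mono (G : GameGraph Q) (FA FG : Set Q) {Z Z' Y Y' X X' : Set Q}
    (hZ : Z ⊆ Z') (hY : Y ⊆ Y') (hX : X ⊆ X') :
    innerW G FA FG Z Y X ⊆ innerW G FA FG Z' Y' X' :=
  aux_lfp_mono (aux_body_monoW G FA FG Z' Y' X')
    (fun _ => aux_body_mono G FA FG hZ hY hX subset_rfl)

theorem aux_innerW_monoX (G : GameGraph Q) (FA FG Z Y : Set Q) :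
    Monotone (fun X => innerW G FA FG Z Y X) :=
  fun _ _ h => aux_innerW_mono G FA FG subset_rfl subset_rfl h

theorem aux_innerX_mono (G : GameGraph Q) (FA FG : Set Q) {Z Z' Y Y' : Set Q}
    (hZ : Z ⊆ Z') (hY : Y ⊆ Y') :
    innerX G FA FG Z Y ⊆ innerX G FA FG Z' Y' :=
  aux_gfp_mono (aux_innerW_monoX G FA FG Z Y)
    (fun _ => aux_innerW_mono G FA FG hZ hY subset_rfl)

theorem aux_innerX_monoY (G : GameGraph Q) (FA FG Z : Set Q) :
    Monotone (fun Y => innerX G FA FG Z Y) :=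
  fun _ _ h => aux_innerX_mono G FA FG subset_rfl h

theorem aux_innerY_monoZ (G : GameGraph Q) (FA FG : Set Q) :
    Monotone (fun Z => innerY G FA FG Z) :=
  fun _ _ h => aux_lfp_mono (aux_innerX_monoY G FA FG _)
    (fun _ => aux_innerX_mono G FA FG h subset_rfl)

end AuxMono

/-! ### Approximant lemmas -/

section AuxApprox
variable {Q : Type*} [Fintype Q] (G : GameGraph Q) (FA FG : Set Q)

theorem aux_phi4_fixed : phi4 G FA FG = innerY G FA FG (phi4 G FA FG) :=
  aux_gfp_fixed (aux_innerY_monoZ G FA FG)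

theorem aux_phi4_lfpY :
    phi4 G FA FG = lfpSet (fun Y => innerX G FA FG (phi4 G FA FG) Y) :=
  aux_phi4_fixed G FA FG

theorem aux_Y_le_succ : ∀ i, Yapprox G FA FG i ⊆ Yapprox G FA FG (i + 1) := by
  intro i
  induction i with
  | zero => intro x hx; exact absurd hx (by simp [Yapprox])
  | succ n ih => exact aux_innerX_mono G FA FG subset_rfl ih

theorem aux_Y_mono : Monotone (Yapprox G FA FG) :=
  monotone_nat_of_le_succ (aux_Y_le_succ G FA FG)

theorem aux_Y_subset_phi4 : ∀ i, Yapprox G FA FG i ⊆ phi4 G FA FG := by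
  have h2 := aux_lfp_fixed (aux_innerX_monoY G FA FG (phi4 G FA FG))
  intro i
  induction i with
  | zero => intro x hx; exact absurd hx (by simp [Yapprox])
  | succ n ih =>
    have : Yapprox G FA FG (n + 1)
        ⊆ innerX G FA FG (phi4 G FA FG) (lfpSet (fun Y => innerX G FA FG (phi4 G FA FG) Y)) :=
      aux_innerX_mono G FA FG subset_rfl ((aux_phi4_lfpY G FA FG) ▸ ih)
    rw [aux_phi4_lfpY G FA FG]
    exact this.trans h2.le

theorem aux_phi4_subset_unionY : phi4 G FA FG ⊆ ⋃ i, Yapprox G FA FG i := by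
  obtain ⟨N, hN⟩ := aux_exists_stab (Yapprox G FA FG) (aux_Y_le_succ G FA FG)
  have hfix : innerX G FA FG (phi4 G FA FG) (Yapprox G FA FG N) ⊆ Yapprox G FA FG N := by
    have : innerX G FA FG (phi4 G FA FG) (Yapprox G FA FG N) = Yapprox G FA FG (N + 1) := rfl
    rw [this, ← hN]
  have h1 : phi4 G FA FG ⊆ Yapprox G FA FG N := by
    rw [aux_phi4_lfpY G FA FG]
    exact aux_lfp_le hfix
  exact h1.trans (Set.subset_iUnion _ N)

theorem aux_Y_succ_lfpW (i₀ : ℕ) :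
    Yapprox G FA FG (i₀ + 1) = lfpSet (fun W =>
      body G FA FG (phi4 G FA FG) (Yapprox G FA FG i₀) (Yapprox G FA FG (i₀ + 1)) W) := by
  have h := aux_gfp_fixed (aux_innerW_monoX G FA FG (phi4 G FA FG) (Yapprox G FA FG i₀))
  exact h

theorem aux_W_le_succ (i : ℕ) : ∀ j, Wapprox G FA FG i j ⊆ Wapprox G FA FG i (j + 1) := by
  intro j
  induction j with
  | zero => intro x hx; exact absurd hx (by simp [Wapprox])
  | succ n ih =>
    show body G FA FG _ _ _ (Wapprox G FA FG i n) ⊆ body G FA FG _ _ _ (Wapprox G FA FG i (n + 1))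
    exact aux_body_mono G FA FG subset_rfl subset_rfl subset_rfl ih

theorem aux_W_mono (i : ℕ) : Monotone (Wapprox G FA FG i) :=
  monotone_nat_of_le_succ (aux_W_le_succ G FA FG i)

theorem aux_W_subset_Y (i₀ : ℕ) : ∀ j, Wapprox G FA FG (i₀ + 1) j ⊆ Yapprox G FA FG (i₀ + 1) := by
  have hfix := aux_lfp_fixed (aux_body_monoW G FA FG (phi4 G FA FG) (Yapprox G FA FG i₀)
    (Yapprox G FA FG (i₀ + 1)))
  rw [← aux_Y_succ_lfpW G FA FG i₀] at hfix
  intro j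
  induction j with
  | zero => intro x hx; exact absurd hx (by simp [Wapprox])
  | succ n ih =>
    have h1 : Wapprox G FA FG (i₀ + 1) (n + 1) ⊆
        body G FA FG (phi4 G FA FG) (Yapprox G FA FG i₀) (Yapprox G FA FG (i₀ + 1))
          (Yapprox G FA FG (i₀ + 1)) :=
      aux_body_mono G FA FG subset_rfl subset_rfl subset_rfl ih
    exact h1.trans hfix.le

theorem aux_Y_subset_unionW (i₀ : ℕ) :
    Yapprox G FA FG (i₀ + 1) ⊆ ⋃ j, Wapprox G FA FG (i₀ + 1) j := by
  obtain ⟨N, hN⟩ := aux_exists_stab (Wapprox G FA FG (i₀ + 1)) (aux_W_le_succ G FA FG (i₀ + 1))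
  have hfix : body G FA FG (phi4 G FA FG) (Yapprox G FA FG i₀) (Yapprox G FA FG (i₀ + 1))
      (Wapprox G FA FG (i₀ + 1) N) ⊆ Wapprox G FA FG (i₀ + 1) N := by
    have : body G FA FG (phi4 G FA FG) (Yapprox G FA FG i₀) (Yapprox G FA FG (i₀ + 1))
        (Wapprox G FA FG (i₀ + 1) N) = Wapprox G FA FG (i₀ + 1) (N + 1) := rfl
    rw [this, ← hN]
  have h1 : Yapprox G FA FG (i₀ + 1) ⊆ Wapprox G FA FG (i₀ + 1) N := by
    rw [aux_Y_succ_lfpW G FA FG i₀]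
    exact aux_lfp_le hfix
  exact h1.trans (Set.subset_iUnion _ N)

theorem aux_W_subset_phi4 {i : ℕ} (hi : 0 < i) (j : ℕ) :
    Wapprox G FA FG i j ⊆ phi4 G FA FG := by
  obtain ⟨i₀, rfl⟩ := Nat.exists_eq_succ_of_ne_zero hi.ne'
  exact (aux_W_subset_Y G FA FG i₀ j).trans (aux_Y_subset_phi4 G FA FG _)

end AuxApprox

/-! ### Rank lemmas -/

section AuxRank
set_option linter.unusedSectionVars false
variable {Q : Type*} [Fintype Q] {G : GameGraph Q} {FA FG : Set Q}

theorem aux_rank_canonical {t : Q} {m : ℕ} (ht : t ∈ Yapprox G FA FG m) :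
    ∃ i j, hasRank G FA FG t i j ∧ i ≤ m ∧
      ∀ j₀, t ∈ Wapprox G FA FG i j₀ → j ≤ j₀ := by
  classical
  have hex : ∃ i, t ∈ Yapprox G FA FG i := ⟨m, ht⟩
  have hti : t ∈ Yapprox G FA FG (Nat.find hex) := Nat.find_spec hex
  have him : Nat.find hex ≤ m := Nat.find_le ht
  have hipos : 0 < Nat.find hex := by
    rcases Nat.eq_zero_or_pos (Nat.find hex) with h | h
    · rw [h] at hti; exact absurd hti (by simp [Yapprox])
    · exact h
  have htni : t ∉ Yapprox G FA FG (Nat.find hex - 1) := Nat.find_min hex (by omega)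
  obtain ⟨i₀, hi₀⟩ := Nat.exists_eq_succ_of_ne_zero hipos.ne'
  have hexW : ∃ j, t ∈ Wapprox G FA FG (Nat.find hex) j := by
    have h1 := aux_Y_subset_unionW G FA FG i₀
    rw [hi₀]
    rw [hi₀] at hti
    simpa using Set.mem_iUnion.1 (h1 hti)
  have htj : t ∈ Wapprox G FA FG (Nat.find hex) (Nat.find hexW) := Nat.find_spec hexW
  have hjpos : 0 < Nat.find hexW := by
    rcases Nat.eq_zero_or_pos (Nat.find hexW) with h | h
    · rw [h] at htj; exact absurd htj (by simp [Wapprox])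
    · exact h
  have htnj : t ∉ Wapprox G FA FG (Nat.find hex) (Nat.find hexW - 1) :=
    Nat.find_min hexW (by omega)
  exact ⟨Nat.find hex, Nat.find hexW,
    ⟨hipos, hjpos, ⟨⟨hti, htni⟩, ⟨htj, htnj⟩⟩⟩, him, fun j₀ h => Nat.find_le h⟩

theorem aux_rank_unique {t : Q} {i j i' j' : ℕ} (h : hasRank G FA FG t i j)
    (h' : hasRank G FA FG t i' j') : i = i' ∧ j = j' := by
  obtain ⟨hi, hj, ⟨hY, hnY⟩, hW, hnW⟩ := h
  obtain ⟨hi', hj', ⟨hY', hnY'⟩, hW', hnW'⟩ := h'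
  have hii : i = i' := by
    rcases lt_trichotomy i i' with h | h | h
    · exact absurd (aux_Y_mono G FA FG (show i ≤ i' - 1 by omega) hY) hnY'
    · exact h
    · exact absurd (aux_Y_mono G FA FG (show i' ≤ i - 1 by omega) hY') hnY
  subst hii
  refine ⟨rfl, ?_⟩
  rcases lt_trichotomy j j' with h | h | h
  · exact absurd (aux_W_mono G FA FG i (show j ≤ j' - 1 by omega) hW) hnW'
  · exact h
  · exact absurd (aux_W_mono G FA FG i (show j' ≤ j - 1 by omega) hW') hnW

theorem aux_rank_mem_phi4 {t : Q} {i j : ℕ} (h : hasRank G FA FG t i j) :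
    t ∈ phi4 G FA FG :=
  aux_Y_subset_phi4 G FA FG i h.2.2.1.1

theorem aux_exists_rank {t : Q} (ht : t ∈ phi4 G FA FG) :
    ∃ i j, hasRank G FA FG t i j := by
  obtain ⟨m, hm⟩ := Set.mem_iUnion.1 (aux_phi4_subset_unionY G FA FG ht)
  obtain ⟨i, j, hr, -, -⟩ := aux_rank_canonical hm
  exact ⟨i, j, hr⟩

theorem aux_rank_cases {t : Q} {i j : ℕ} (h : hasRank G FA FG t i j) :
    t ∈ body G FA FG (phi4 G FA FG) (Yapprox G FA FG (i - 1)) (Yapprox G FA FG i)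
      (Wapprox G FA FG i (j - 1)) := by
  obtain ⟨hi, hj, -, hW, -⟩ := h
  obtain ⟨j₀, rfl⟩ := Nat.exists_eq_succ_of_ne_zero hj.ne'
  exact hW

end AuxRank

/-! ### Step lemmas -/

section AuxStep
set_option linter.unusedSectionVars false
variable {Q : Type*} [Fintype Q] {G : GameGraph Q} {FA FG : Set Q}

theorem aux_Pre1_env {t : Q} {P : Set Q} (ht : t ∈ G.env) (h : t ∈ G.Pre1 P) :
    G.delta t ⊆ P := by
  rcases h with ⟨-, hd⟩ | ⟨hs, -⟩
  · exact hd
  · exact absurd hs (Set.disjoint_left.1 G.disjoint_env_sys ht)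

theorem aux_env_or_sys (G : GameGraph Q) (t : Q) : t ∈ G.env ∨ t ∈ G.sys := by
  have h : t ∈ G.env ∪ G.sys := by rw [G.union_env_sys]; trivial
  exact h

theorem aux_rank_one_one {t : Q} (h : hasRank G FA FG t 1 1) : t ∈ FG := by
  have hb := aux_rank_cases h
  rcases hb with (⟨hFG, -⟩ | hP) | ⟨-, hPreE, -⟩
  · exact hFG
  · exfalso
    rcases hP with ⟨-, hd⟩ | ⟨-, y, -, hy⟩
    · obtain ⟨u, hu⟩ := G.delta_nonempty t
      have : u ∈ Yapprox G FA FG 0 := hd hu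
      exact absurd this (by simp [Yapprox])
    · exact absurd hy (by simp [Yapprox])
  · obtain ⟨y, -, hy⟩ := hPreE
    exact absurd hy (by simp [Wapprox])

theorem aux_env_closure {t u : Q} (ht : t ∈ phi4 G FA FG) (hte : t ∈ G.env)
    (hu : u ∈ G.delta t) : u ∈ phi4 G FA FG := by
  obtain ⟨i, j, hr⟩ := aux_exists_rank ht
  have hb := aux_rank_cases hr
  rcases hb with (⟨-, hP⟩ | hP) | ⟨-, -, hP1⟩
  · exact aux_Pre1_env hte hP hu
  · exact aux_Y_subset_phi4 G FA FG _ (aux_Pre1_env hte hP hu)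
  · rcases aux_Pre1_env hte hP1 hu with hW | ⟨hY, -⟩
    · exact aux_W_subset_phi4 G FA FG hr.1 _ hW
    · exact aux_Y_subset_phi4 G FA FG _ hY

theorem aux_env_progress {t : Q} {i j : ℕ} (hte : t ∈ G.env) (hnFG : t ∉ FG)
    (hr : hasRank G FA FG t i j) :
    ∃ u, u ∈ G.delta t ∧ ∃ i' j', hasRank G FA FG u i' j' ∧ rankLt (i', j') (i, j) := by
  have hipos := hr.1
  have hjpos := hr.2.1
  have hb := aux_rank_cases hr
  rcases hb with (⟨hFG, -⟩ | hP) | ⟨-, hPreE, -⟩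
  · exact absurd hFG hnFG
  · obtain ⟨u, hu⟩ := G.delta_nonempty t
    have huY := aux_Pre1_env hte hP hu
    obtain ⟨i', j', hr', hile, -⟩ := aux_rank_canonical huY
    exact ⟨u, hu, i', j', hr', Or.inl (by omega)⟩
  · obtain ⟨u, hu, huW⟩ := hPreE
    have huY : u ∈ Yapprox G FA FG i := by
      obtain ⟨i₀, rfl⟩ := Nat.exists_eq_succ_of_ne_zero hipos.ne'
      exact aux_W_subset_Y G FA FG i₀ _ huW
    obtain ⟨i', j', hr', hile, hjmin⟩ := aux_rank_canonical huY
    rcases lt_or_eq_of_le hile with h | h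
    · exact ⟨u, hu, i', j', hr', Or.inl h⟩
    · subst h
      have hjle := hjmin _ huW
      exact ⟨u, hu, i', j', hr', Or.inr ⟨rfl, by omega⟩⟩

theorem aux_sys_next {f : Q → Q} (hf : GoodStrategy G FA FG f) {t : Q}
    (ht : t ∈ phi4 G FA FG) (hts : t ∈ G.sys) :
    f t ∈ G.delta t ∧ f t ∈ phi4 G FA FG ∧
      ∀ i j, hasRank G FA FG t i j → (i, j) ≠ ((1 : ℕ), (1 : ℕ)) →
        ∃ i' j', hasRank G FA FG (f t) i' j' ∧ rankLt (i', j') (i, j) := by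
  obtain ⟨hd, hrk⟩ := hf t hts ht
  refine ⟨hd, ?_, fun i j hr hne => (hrk i j hr).2 hne⟩
  obtain ⟨i, j, hr⟩ := aux_exists_rank ht
  by_cases h11 : (i, j) = ((1 : ℕ), (1 : ℕ))
  · exact (hrk i j hr).1 h11
  · obtain ⟨i', j', hr', -⟩ := (hrk i j hr).2 h11
    exact aux_rank_mem_phi4 hr'

end AuxStep

/-- Lemma 5 of the paper: if `q ∈ Z^∞` and
`L_q(H,F_G) ⊆ L_q(H,F_A)` then `Pre(L_q(H,f¹)) = Pre(L_q(H,f¹) ∩ L_q(H,F_A))`,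
i.e. the extracted strategy `f¹` is non-conflicting from `q`. -/
theorem strategy_nonconflicting {Q : Type*} [Fintype Q] (G : GameGraph Q)
    (FA FG : Set Q) (f : Q → Q) (hf : GoodStrategy G FA FG f)
    (q : Q) (hq : q ∈ phi4 G FA FG) (hsub : LBuchi G q FG ⊆ LBuchi G q FA) :
    prefixes (Lmem G q f) = prefixes (Lmem G q f ∩ LBuchi G q FA) := by
  apply Set.Subset.antisymm
  · intro w hw
    obtain ⟨π, hπ, k, hwk⟩ := hw
    obtain ⟨hπplay, hπcomp⟩ := hπ
    have hπZ : ∀ n, π n ∈ phi4 G FA FG := by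
      intro n
      induction n with
      | zero => rw [hπplay.1]; exact hq
      | succ n ih =>
        rcases aux_env_or_sys G (π n) with he | hs
        · exact aux_env_closure ih he (hπplay.2 n)
        · rw [hπcomp n hs]; exact (aux_sys_next hf ih hs).2.1
    have hstep : ∀ s, ∃ t, s ∈ phi4 G FA FG →
        t ∈ G.delta s ∧ (s ∈ G.sys → t = f s) ∧ t ∈ phi4 G FA FG ∧
          (s ∉ FG → ∀ i j, hasRank G FA FG s i j →
            ∃ i' j', hasRank G FA FG t i' j' ∧ rankLt (i', j') (i, j)) := by
      intro s
      by_cases hs : s ∈ phi4 G FA FG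
      · rcases aux_env_or_sys G s with he | hsys
        · by_cases hFG : s ∈ FG
          · obtain ⟨t, ht⟩ := G.delta_nonempty s
            exact ⟨t, fun _ => ⟨ht,
              fun hsys => absurd hsys (Set.disjoint_left.1 G.disjoint_env_sys he),
              aux_env_closure hs he ht, fun hn => absurd hFG hn⟩⟩
          · obtain ⟨i₀, j₀, hr₀⟩ := aux_exists_rank hs
            obtain ⟨t, ht, i', j', hrt, hlt⟩ := aux_env_progress he hFG hr₀
            refine ⟨t, fun _ => ⟨ht,
              fun hsys => absurd hsys (Set.disjoint_left.1 G.disjoint_env_sys he),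
              aux_rank_mem_phi4 hrt, fun _ i j hr => ?_⟩⟩
            obtain ⟨e1, e2⟩ := aux_rank_unique hr hr₀
            subst e1; subst e2
            exact ⟨i', j', hrt, hlt⟩
        · obtain ⟨hd, hmem, hdec⟩ := aux_sys_next hf hs hsys
          refine ⟨f s, fun _ => ⟨hd, fun _ => rfl, hmem, fun hn i j hr => ?_⟩⟩
          have hne : (i, j) ≠ ((1 : ℕ), (1 : ℕ)) := by
            intro h
            rw [Prod.mk.injEq] at h
            rw [h.1, h.2] at hr
            exact hn (aux_rank_one_one hr)
          exact hdec i j hr hne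
      · exact ⟨s, fun h => absurd h hs⟩
    choose g hg using hstep
    set ρ : ℕ → Q := fun m => g^[m] (π k) with hρ
    have hρs : ∀ m, ρ (m + 1) = g (ρ m) := by
      intro m
      simp only [hρ]
      exact Function.iterate_succ_apply' g m (π k)
    have hρZ : ∀ m, ρ m ∈ phi4 G FA FG := by
      intro m
      induction m with
      | zero => exact hπZ k
      | succ n ih => rw [hρs n]; exact ((hg _) ih).2.2.1
    set π' : ℕ → Q := fun n => if n ≤ k then π n else ρ (n - k) with hπ'
    have hπ'lt : ∀ n, n ≤ k → π' n = π n := by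
      intro n hn
      simp only [hπ']
      exact if_pos hn
    have hπ'ge : ∀ n, k ≤ n → π' n = ρ (n - k) := by
      intro n hn
      by_cases h : n ≤ k
      · have he : n = k := le_antisymm h hn
        subst he
        rw [hπ'lt n le_rfl, Nat.sub_self]
        simp only [hρ, Function.iterate_zero_apply]
      · simp only [hπ']
        exact if_neg h
    have hπ'Z : ∀ n, π' n ∈ phi4 G FA FG := by
      intro n
      rcases le_or_gt n k with h | h
      · rw [hπ'lt n h]; exact hπZ n
      · rw [hπ'ge n h.le]; exact hρZ _
    have hπ'step : ∀ n, k ≤ n → π' (n + 1) = g (π' n) := by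
      intro n hn
      rw [hπ'ge n hn, hπ'ge (n + 1) (by omega)]
      have h1 : n + 1 - k = (n - k) + 1 := by omega
      rw [h1, hρs]
    have hplay : IsPlayFrom G q π' := by
      constructor
      · rw [hπ'lt 0 (Nat.zero_le k)]; exact hπplay.1
      · intro n
        rcases lt_or_ge n k with h | h
        · rw [hπ'lt (n + 1) (by omega), hπ'lt n (by omega)]; exact hπplay.2 n
        · rw [hπ'step n h]
          exact ((hg _) (hπ'Z n)).1
    have hcomp : ∀ n, π' n ∈ G.sys → π' (n + 1) = f (π' n) := by
      intro n hs
      rcases lt_or_ge n k with h | h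
      · rw [hπ'lt (n + 1) (by omega), hπ'lt n (by omega)]
        exact hπcomp n (by rwa [hπ'lt n (by omega)] at hs)
      · rw [hπ'step n h]
        exact ((hg _) (hπ'Z n)).2.1 hs
    have hreach : ∀ i j n, k ≤ n → hasRank G FA FG (π' n) i j →
        ∃ m, n ≤ m ∧ π' m ∈ FG := by
      intro i
      induction i using Nat.strong_induction_on with
      | _ i ih1 =>
      intro j
      induction j using Nat.strong_induction_on with
      | _ j ih2 =>
      intro n hn hr
      by_cases hFG : π' n ∈ FG
      · exact ⟨n, le_rfl, hFG⟩
      · obtain ⟨i', j', hrt, hlt⟩ := ((hg _) (hπ'Z n)).2.2.2 hFG i j hr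
        rw [← hπ'step n hn] at hrt
        rcases hlt with h | ⟨he, hj⟩
        · obtain ⟨m, hm, hmFG⟩ := ih1 i' h j' (n + 1) (by omega) hrt
          exact ⟨m, by omega, hmFG⟩
        · subst he
          obtain ⟨m, hm, hmFG⟩ := ih2 j' hj (n + 1) (by omega) hrt
          exact ⟨m, by omega, hmFG⟩
    have hinf : InfOft π' FG := by
      intro n
      obtain ⟨i, j, hr⟩ := aux_exists_rank (hπ'Z (max n k))
      obtain ⟨m, hm, hmFG⟩ := hreach i j (max n k) (le_max_right n k) hr
      exact ⟨m, le_trans (le_max_left n k) hm, hmFG⟩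
    have hFAinf : InfOft π' FA := (hsub ⟨hplay, hinf⟩).2
    refine ⟨π', ⟨⟨hplay, hcomp⟩, ⟨hplay, hFAinf⟩⟩, k, ?_⟩
    rw [hwk]
    apply List.map_congr_left
    intro a ha
    exact (hπ'lt a (le_of_lt (List.mem_range.1 ha))).symm
  · rintro w ⟨π, hπm, kk, hwk⟩
    exact ⟨π, hπm.1, kk, hwk⟩

end GR1
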